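/- Let δ > 0, E_c > 0, let n ≥ 1 be an integer, and set ξ = √(1 + 2E_c/δ). Then for every real x with δ ≤ x ≤ 2E_c + δ, |T_n((x − δ)/E_c − 1)| ≤ 2 e^{−2n/ξ} · T_n(1 + δ/E_c). (That is, the Chebyshev polynomial rescaled to the interval [δ, 2E_c + δ] and normalized to value 1 at x = 0 is bounded in absolute value by 2e^{−2n/ξ} on that interval.) -/

import Mathlib

set_option maxHeartbeats 800000


open Polynomial

private lemma T_real_cosh (t : ℝ) (n : ℤ) :
    (Polynomial.Chebyshev.T ℝ n).eval (Real.cosh t) = Real.cosh (n * t) := by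
  have h := Polynomial.Chebyshev.complex_ofReal_eval_T (Real.cosh t) n
  rw [Complex.ofReal_cosh, ← Complex.cos_mul_I, Polynomial.Chebyshev.T_complex_cos] at h
  have h2 : (n : ℂ) * ((t : ℂ) * Complex.I) = ((n : ℝ) * t : ℝ) * Complex.I := by
    push_cast; ring
  rw [h2, Complex.cos_mul_I, ← Complex.ofReal_cosh] at h
  exact_mod_cast h

private lemma log_ge_aux (y : ℝ) (hy : 0 ≤ y) : 2 * y / (2 + y) ≤ Real.log (1 + y) := by
  set f : ℝ → ℝ := fun z => (2 + z) * Real.log (1 + z) - 2 * z with hf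
  have hderiv : ∀ z ∈ Set.Ioi (-1 : ℝ),
      HasDerivAt f (Real.log (1 + z) + (2 + z) / (1 + z) - 2) z := by
    intro z hz
    have hz1 : (0 : ℝ) < 1 + z := by linarith [Set.mem_Ioi.mp hz]
    have hlog : HasDerivAt (fun z : ℝ => Real.log (1 + z)) (1 / (1 + z)) z := by
      have := (Real.hasDerivAt_log hz1.ne').comp z ((hasDerivAt_id z).const_add 1)
      simpa [Function.comp_def] using this
    have h1 : HasDerivAt (fun z : ℝ => (2 + z) * Real.log (1 + z))
        (1 * Real.log (1 + z) + (2 + z) * (1 / (1 + z))) z :=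
      ((hasDerivAt_id z).const_add 2).mul hlog
    have h2 : HasDerivAt (fun z : ℝ => 2 * z) 2 z := by
      simpa using (hasDerivAt_id z).const_mul 2
    have h3 := h1.sub h2
    convert h3 using 1
    · rfl
    · rfl
    · rfl
    · ring
  have hmono : MonotoneOn f (Set.Ici (0 : ℝ)) := by
    apply monotoneOn_of_deriv_nonneg (convex_Ici 0)
    · intro z hz
      have hz0 : (0 : ℝ) ≤ z := hz
      exact ((hderiv z (by simp; linarith)).differentiableAt).continuousAt.continuousWithinAt
    · intro z hz
      have hz0 : (0 : ℝ) < z := by simpa using hz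
      exact ((hderiv z (by simp; linarith)).differentiableAt).differentiableWithinAt
    · intro z hz
      have hz0 : (0 : ℝ) < z := by simpa using hz
      rw [HasDerivAt.deriv (hderiv z (by simp; linarith))]
      have hlb : 1 - 1 / (1 + z) ≤ Real.log (1 + z) := by
        have h := Real.log_le_sub_one_of_pos (x := 1 / (1 + z)) (by positivity)
        rw [Real.log_div one_ne_zero (by linarith : (1:ℝ) + z ≠ 0), Real.log_one] at h
        linarith
      have heq : (2 + z) / (1 + z) = 1 + 1 / (1 + z) := by field_simp; ring
      rw [heq]; linarith
  have h0 : f 0 ≤ f y := hmono (by simp) (by simpa using hy) hy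
  have hf0 : f 0 = 0 := by simp [hf]
  rw [hf0] at h0
  simp only [hf] at h0
  rw [div_le_iff₀ (by linarith : (0:ℝ) < 2 + y)]
  nlinarith [h0]

theorem chebyshev_boxcar_bound (δ Ec : ℝ) (hδ : 0 < δ) (hEc : 0 < Ec)
    (n : ℕ) (hn : 1 ≤ n) (x : ℝ) (h1 : δ ≤ x) (h2 : x ≤ 2 * Ec + δ) :
    |(Polynomial.Chebyshev.T ℝ n).eval ((x - δ) / Ec - 1)| ≤
      2 * Real.exp (-(2 * n) / Real.sqrt (1 + 2 * Ec / δ)) *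
        (Polynomial.Chebyshev.T ℝ n).eval (1 + δ / Ec) := by
  set ξ := Real.sqrt (1 + 2 * Ec / δ) with hξdef
  set ε := δ / Ec with hε
  have hε0 : 0 < ε := div_pos hδ hEc
  have hξpos : 0 < ξ := Real.sqrt_pos.mpr (by positivity)
  have hξ2 : ξ ^ 2 = (ε + 2) / ε := by
    rw [hξdef, Real.sq_sqrt (by positivity), hε]
    field_simp
  -- Step 1: |T_n(y)| ≤ 1 on [-1,1]
  have hy1 : -1 ≤ (x - δ) / Ec - 1 := by
    have : 0 ≤ (x - δ) / Ec := div_nonneg (by linarith) hEc.le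
    linarith
  have hy2 : (x - δ) / Ec - 1 ≤ 1 := by
    have : (x - δ) / Ec ≤ 2 := (div_le_iff₀ hEc).mpr (by linarith)
    linarith
  have habs : |(Polynomial.Chebyshev.T ℝ n).eval ((x - δ) / Ec - 1)| ≤ 1 := by
    have hcos : Real.cos (Real.arccos ((x - δ) / Ec - 1)) = (x - δ) / Ec - 1 :=
      Real.cos_arccos hy1 hy2
    rw [← hcos, Polynomial.Chebyshev.T_real_cos]
    exact Real.abs_cos_le_one _
  -- Step 2: t with cosh t = 1 + ε
  set w := Real.sqrt (ε ^ 2 + 2 * ε) with hw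
  have hw2 : w ^ 2 = ε ^ 2 + 2 * ε := Real.sq_sqrt (by positivity)
  have hw0 : 0 < w := Real.sqrt_pos.mpr (by positivity)
  set t := Real.log (1 + ε + w) with ht
  have ha0 : (0 : ℝ) < 1 + ε + w := by linarith
  have hexp_t : Real.exp t = 1 + ε + w := Real.exp_log ha0
  have hexp_nt : Real.exp (-t) = 1 + ε - w := by
    have hmul : (1 + ε + w) * (1 + ε - w) = 1 := by nlinarith
    rw [Real.exp_neg, hexp_t]
    exact inv_eq_of_mul_eq_one_right hmul
  have hcosh_t : Real.cosh t = 1 + ε := by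
    rw [Real.cosh_eq, hexp_t, hexp_nt]; ring
  -- Step 3: T_n(1+ε) = cosh(n t)
  have hT : (Polynomial.Chebyshev.T ℝ n).eval (1 + ε) = Real.cosh (n * t) := by
    rw [← hcosh_t, T_real_cosh]
    push_cast; ring_nf
  -- Step 4: (ε+w)ξ = 2+ε+w, hence t ≥ 2/ξ
  have hkey : (ε + w) * ξ = 2 + ε + w := by
    have hmain : (ε + w) ^ 2 * (ε + 2) = (2 + ε + w) ^ 2 * ε := by
      linear_combination 2 * hw2
    have hsq : ((ε + w) * ξ) ^ 2 = (2 + ε + w) ^ 2 := by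
      rw [mul_pow, hξ2,
        show (ε + w) ^ 2 * ((ε + 2) / ε) = ((ε + w) ^ 2 * (ε + 2)) / ε by ring,
        hmain, mul_div_assoc, div_self hε0.ne', mul_one]
    have hl : 0 ≤ (ε + w) * ξ := by positivity
    have hr : 0 ≤ 2 + ε + w := by linarith
    have := congrArg Real.sqrt hsq
    rwa [Real.sqrt_sq hl, Real.sqrt_sq hr] at this
  have hts : 2 / ξ ≤ t := by
    have hlog := log_ge_aux (ε + w) (by positivity)
    have heq1 : 2 * (ε + w) / (2 + (ε + w)) = 2 / ξ := by
      rw [show 2 + (ε + w) = (ε + w) * ξ by linarith [hkey]]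
      rw [mul_comm (ε + w) ξ, mul_div_mul_right _ _ (by positivity : ε + w ≠ 0)]
    rw [heq1] at hlog
    calc 2 / ξ ≤ Real.log (1 + (ε + w)) := hlog
      _ = t := by rw [ht]; ring_nf
  -- Step 5: conclude
  have hn1 : (1 : ℝ) ≤ (n : ℝ) := by exact_mod_cast hn
  have h7 : 0 ≤ (n : ℝ) * t - 2 * (n : ℝ) / ξ := by
    have := mul_le_mul_of_nonneg_left hts (by linarith : (0:ℝ) ≤ (n:ℝ))
    have heq : (n : ℝ) * (2 / ξ) = 2 * (n : ℝ) / ξ := by ring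
    linarith [heq ▸ this]
  have h5 : Real.exp ((n : ℝ) * t) / 2 ≤ Real.cosh ((n : ℝ) * t) := by
    rw [Real.cosh_eq]
    have := Real.exp_pos (-((n : ℝ) * t))
    linarith
  have h6 : (1 : ℝ) ≤ 2 * Real.exp (-(2 * (n : ℝ)) / ξ) * Real.cosh ((n : ℝ) * t) := by
    have hone : (1 : ℝ) ≤ Real.exp ((n : ℝ) * t - 2 * (n : ℝ) / ξ) := Real.one_le_exp h7
    have hprod : Real.exp (-(2 * (n : ℝ)) / ξ) * Real.exp ((n : ℝ) * t)
        = Real.exp ((n : ℝ) * t - 2 * (n : ℝ) / ξ) := by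
      rw [← Real.exp_add]; ring_nf
    have hstep : 2 * Real.exp (-(2 * (n : ℝ)) / ξ) * (Real.exp ((n : ℝ) * t) / 2)
        ≤ 2 * Real.exp (-(2 * (n : ℝ)) / ξ) * Real.cosh ((n : ℝ) * t) :=
      mul_le_mul_of_nonneg_left h5 (by positivity)
    calc (1 : ℝ) ≤ Real.exp ((n : ℝ) * t - 2 * (n : ℝ) / ξ) := hone
      _ = 2 * Real.exp (-(2 * (n : ℝ)) / ξ) * (Real.exp ((n : ℝ) * t) / 2) := by
          rw [← hprod]; ring
      _ ≤ _ := hstep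
  calc |(Polynomial.Chebyshev.T ℝ n).eval ((x - δ) / Ec - 1)| ≤ 1 := habs
    _ ≤ 2 * Real.exp (-(2 * n) / ξ) * (Polynomial.Chebyshev.T ℝ n).eval (1 + ε) := by
        rw [hT]; exact h6
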